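/- Let (y, z, θ) solve the translator system. Then for every s ∈ ℝ one has the conservation law θ(s) − θ₀ + λ = e^{−z(s)}·(λ + μ·y(s)); consequently θ satisfies the autonomous equation θ'(s) = f(θ(s)) for all s, where f(θ) = μ·cos θ − (θ − θ₀ + λ)·sin θ. -/

import Mathlib

open Real Filter Topology

theorem stmt7
    (lam μ θ₀ : ℝ) (y z θ : ℝ → ℝ)
    (hy0 : y 0 = 0) (hz0 : z 0 = 0) (hθ0 : θ 0 = θ₀)
    (hy : ∀ s : ℝ, HasDerivAt y (Real.exp (z s) * Real.cos (θ s)) s)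
    (hz : ∀ s : ℝ, HasDerivAt z (Real.sin (θ s)) s)
    (hθ : ∀ s : ℝ, HasDerivAt θ
      (-lam * Real.exp (-z s) * Real.sin (θ s) +
        μ * (Real.cos (θ s) - y s * Real.exp (-z s) * Real.sin (θ s))) s) :
    (∀ s : ℝ, θ s - θ₀ + lam = Real.exp (-z s) * (lam + μ * y s)) ∧
    (∀ s : ℝ, HasDerivAt θ
      (μ * Real.cos (θ s) - (θ s - θ₀ + lam) * Real.sin (θ s)) s) := by
  set F : ℝ → ℝ := fun s => θ s - θ₀ + lam - Real.exp (-z s) * (lam + μ * y s) with hF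
  have hF' : ∀ s, HasDerivAt F 0 s := by
    intro s
    have h1 : HasDerivAt (fun s => Real.exp (-z s))
        (Real.exp (-z s) * (-Real.sin (θ s))) s := by
      exact (Real.hasDerivAt_exp (-z s)).comp s ((hz s).neg)
    have h2 : HasDerivAt (fun s => lam + μ * y s)
        (μ * (Real.exp (z s) * Real.cos (θ s))) s :=
      by exact ((hy s).const_mul μ).const_add lam
    have h3 := ((hθ s).sub_const θ₀).add_const lam |>.sub (h1.mul h2)
    refine h3.congr_deriv ?_
    symm
    have hez : Real.exp (-z s) * Real.exp (z s) = 1 := by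
      rw [← Real.exp_add]; simp
    linear_combination (μ * Real.cos (θ s)) * hez
  have hFc : ∀ s, F s = F 0 := by
    intro s
    have hd : Differentiable ℝ F := fun x => (hF' x).differentiableAt
    have := is_const_of_deriv_eq_zero hd (fun x => by simpa using (hF' x).deriv) s 0
    simpa using this
  have hF0 : F 0 = 0 := by simp [hF, hy0, hz0, hθ0]
  have hcons : ∀ s, θ s - θ₀ + lam = Real.exp (-z s) * (lam + μ * y s) := by
    intro s
    have := (hFc s).trans hF0
    simp only [hF] at this
    linarith
  refine ⟨hcons, fun s => ?_⟩
  have := hθ s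
  convert this using 1
  have h := hcons s
  linear_combination (-Real.sin (θ s)) * h
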